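/- Let n ≥ 3 and A₀, A₁, A₂ be real symmetric n×n matrices with s₀A₀ + s₁A₁ + s₂A₂ positive definite for some reals s₀, s₁, s₂. Consider the problem min xᵀA₀x subject to m₁ ≤ xᵀA₁x ≤ M₁ and m₂ ≤ xᵀA₂x ≤ M₂, with m₁ < M₁, m₂ < M₂, and assume there exists x̃ with m₁ < x̃ᵀA₁x̃ < M₁ and m₂ < x̃ᵀA₂x̃ < M₂. Then the optimal value of this problem equals the optimal value of its Lagrangian dual: sup{λ₁m₁ − μ₁M₁ + λ₂m₂ − μ₂M₂ : λ₁,μ₁,λ₂,μ₂ ≥ 0, A₀ + (μ₁−λ₁)A₁ + (μ₂−λ₂)A₂ ⪰ 0}. -/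

import Mathlib

open Matrix Set

variable {n : ℕ}

def Msph (d : Fin n → ℝ) : Set (Fin n → ℝ) :=
  {y | ∑ i, (y i)^2 = 1 ∧ ∑ i, d i * (y i)^2 = 0}

lemma seg_path (d : Fin n → ℝ) {u v : Fin n → ℝ} (hu : u ∈ Msph d) (hv : v ∈ Msph d)
    (hsign : ∀ i, 0 ≤ u i * v i) : JoinedIn (Msph d) u v := by
  classical
  set sgn : Fin n → ℝ := fun i => if u i < 0 ∨ v i < 0 then (-1:ℝ) else 1 with hsgn
  have hsgnsq : ∀ i, (sgn i)^2 = 1 := by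
    intro i; by_cases h : u i < 0 ∨ v i < 0 <;> simp [hsgn, h]
  set f : ℝ → (Fin n → ℝ) := fun t i => sgn i * Real.sqrt ((1-t) * (u i)^2 + t * (v i)^2) with hf
  have hcont : Continuous f := by
    apply continuous_pi; intro i
    exact continuous_const.mul ((Real.continuous_sqrt).comp (by continuity))
  have harg : ∀ t ∈ Icc (0:ℝ) 1, ∀ i, 0 ≤ (1-t) * (u i)^2 + t * (v i)^2 := by
    intro t ht i
    have h1 := ht.1; have h2 := ht.2
    have : (0:ℝ) ≤ 1 - t := by linarith
    positivity
  have hsq : ∀ t ∈ Icc (0:ℝ) 1, ∀ i, (f t i)^2 = (1-t) * (u i)^2 + t * (v i)^2 := by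
    intro t ht i
    rw [hf]; simp only
    rw [mul_pow, hsgnsq, one_mul, Real.sq_sqrt (harg t ht i)]
  have hmem : ∀ t ∈ Icc (0:ℝ) 1, f t ∈ Msph d := by
    intro t ht
    constructor
    · have : ∑ i, (f t i)^2 = ∑ i, ((1-t) * (u i)^2 + t * (v i)^2) :=
        Finset.sum_congr rfl fun i _ => hsq t ht i
      rw [this, Finset.sum_add_distrib, ← Finset.mul_sum, ← Finset.mul_sum, hu.1, hv.1]; ring
    · have : ∑ i, d i * (f t i)^2 = ∑ i, ((1-t) * (d i * (u i)^2) + t * (d i * (v i)^2)) :=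
        Finset.sum_congr rfl fun i _ => by rw [hsq t ht i]; ring
      rw [this, Finset.sum_add_distrib, ← Finset.mul_sum, ← Finset.mul_sum, hu.2, hv.2]; ring
  have hend : ∀ (w : Fin n → ℝ), (∀ i, 0 ≤ u i * v i) → True := fun _ _ => trivial
  have h0 : f 0 = u := by
    funext i
    rw [hf]; simp only
    rw [show (1-(0:ℝ)) * (u i)^2 + 0 * (v i)^2 = (u i)^2 by ring, Real.sqrt_sq_eq_abs]
    rcases lt_trichotomy (u i) 0 with h | h | h
    · simp [hsgn, h, abs_of_neg h]
    · simp [h]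
    · have hv0 : ¬ v i < 0 := by
        intro hv0
        have := hsign i
        nlinarith
      simp [hsgn, not_lt.2 h.le, hv0, abs_of_pos h]
  have h1 : f 1 = v := by
    funext i
    rw [hf]; simp only
    rw [show (1-(1:ℝ)) * (u i)^2 + 1 * (v i)^2 = (v i)^2 by ring, Real.sqrt_sq_eq_abs]
    rcases lt_trichotomy (v i) 0 with h | h | h
    · simp [hsgn, h, abs_of_neg h]
    · simp [h]
    · have hu0 : ¬ u i < 0 := by
        intro hu0
        have := hsign i
        nlinarith
      simp [hsgn, not_lt.2 h.le, hu0, abs_of_pos h]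
  exact JoinedIn.ofLine hcont.continuousOn h0 h1 (fun y ⟨t, ht, hty⟩ => hty ▸ hmem t ht)

def Dset (d : Fin n → ℝ) : Set (Fin n → ℝ) :=
  {q | (∀ i, 0 ≤ q i) ∧ ∑ i, q i = 1 ∧ ∑ i, d i * q i = 0}

lemma sq_mem_Dset (d : Fin n → ℝ) {u : Fin n → ℝ} (hu : u ∈ Msph d) :
    (fun i => (u i)^2) ∈ Dset d :=
  ⟨fun i => sq_nonneg _, hu.1, hu.2⟩

lemma flip_path (d : Fin n → ℝ) {u : Fin n → ℝ} (hu : u ∈ Msph d)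
    {q' : Fin n → ℝ} (hq' : q' ∈ Dset d) {i : Fin n} (hqi : q' i = 0) :
    JoinedIn (Msph d) u (Function.update u i (-(u i))) := by
  classical
  set m : Fin n → ℝ := fun j => (if u j < 0 then (-1:ℝ) else 1) * Real.sqrt (q' j) with hm
  have hmsq : ∀ j, (m j)^2 = q' j := by
    intro j
    rw [hm]; simp only
    rw [mul_pow, Real.sq_sqrt (hq'.1 j)]
    by_cases h : u j < 0 <;> simp [h]
  have hmmem : m ∈ Msph d := by
    constructor
    · rw [Finset.sum_congr rfl fun j _ => hmsq j]; exact hq'.2.1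
    · rw [Finset.sum_congr rfl fun j _ => by rw [hmsq j]]; exact hq'.2.2
  have humem : Function.update u i (-(u i)) ∈ Msph d := by
    have h1 : ∀ j, (Function.update u i (-(u i)) j)^2 = (u j)^2 := by
      intro j
      by_cases h : j = i
      · subst h; simp
      · simp [Function.update_of_ne h]
    exact ⟨by rw [Finset.sum_congr rfl fun j _ => h1 j]; exact hu.1,
           by rw [Finset.sum_congr rfl fun j _ => by rw [h1 j]]; exact hu.2⟩
  have hs1 : ∀ j, 0 ≤ u j * m j := by
    intro j
    rw [hm]; simp only
    by_cases h : u j < 0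
    · simp only [h, if_true]
      have : 0 ≤ Real.sqrt (q' j) := Real.sqrt_nonneg _
      nlinarith
    · simp only [h, if_false, one_mul]
      exact mul_nonneg (not_lt.1 h) (Real.sqrt_nonneg _)
  have hs2 : ∀ j, 0 ≤ Function.update u i (-(u i)) j * m j := by
    intro j
    by_cases h : j = i
    · subst h
      have : m j = 0 := by rw [hm]; simp [hqi]
      rw [this, mul_zero]
    · rw [Function.update_of_ne h]; exact hs1 j
  exact (seg_path d hu hmmem hs1).trans
    ((seg_path d humem hmmem hs2).symm)

lemma sum_mul_single (d : Fin n → ℝ) (k : Fin n) (a : ℝ) :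
    ∑ m, d m * (Pi.single k a : Fin n → ℝ) m = d k * a := by
  classical
  rw [Finset.sum_eq_single k (fun m _ hm => by rw [Pi.single_eq_of_ne hm, mul_zero])
    (fun h => absurd (Finset.mem_univ k) h)]
  rw [Pi.single_eq_same]

lemma exists_q_zero (d : Fin n → ℝ) {i k l : Fin n} (hk : k ≠ i) (hl : l ≠ i)
    (hdk : d k ≤ 0) (hdl : 0 ≤ d l) : ∃ q ∈ Dset d, q i = 0 := by
  classical
  rcases eq_or_lt_of_le hdk with h0 | hkneg
  · refine ⟨Pi.single k 1, ⟨?_, ?_, ?_⟩, ?_⟩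
    · intro m; by_cases h : m = k <;> simp [Pi.single_apply, h]
    · have := sum_mul_single (fun _ => (1:ℝ)) k 1; simpa using this
    · rw [sum_mul_single, ← h0, mul_one]
    · exact Pi.single_eq_of_ne (Ne.symm hk) 1
  rcases eq_or_lt_of_le hdl with h0 | hlpos
  · refine ⟨Pi.single l 1, ⟨?_, ?_, ?_⟩, ?_⟩
    · intro m; by_cases h : m = l <;> simp [Pi.single_apply, h]
    · have := sum_mul_single (fun _ => (1:ℝ)) l 1; simpa using this
    · rw [sum_mul_single, ← h0, zero_mul]
    · exact Pi.single_eq_of_ne (Ne.symm hl) 1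
  have hkl : k ≠ l := by rintro rfl; linarith
  have hden : 0 < d l - d k := by linarith
  set a : ℝ := d l / (d l - d k) with ha_def
  set b : ℝ := -(d k) / (d l - d k) with hb_def
  have ha : 0 ≤ a := div_nonneg hlpos.le hden.le
  have hb : 0 ≤ b := div_nonneg (by linarith) hden.le
  refine ⟨Pi.single k a + Pi.single l b, ⟨?_, ?_, ?_⟩, ?_⟩
  · intro m
    by_cases h1 : m = k <;> by_cases h2 : m = l <;>
      simp_all [Pi.single_apply] <;> positivity
  · have e1 := sum_mul_single (fun _ => (1:ℝ)) k a
    have e2 := sum_mul_single (fun _ => (1:ℝ)) l b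
    simp only [Pi.add_apply, Finset.sum_add_distrib]
    simp only [one_mul] at e1 e2
    rw [e1, e2, ha_def, hb_def]
    field_simp
    ring
  · simp only [Pi.add_apply, mul_add, Finset.sum_add_distrib]
    rw [sum_mul_single, sum_mul_single, ha_def, hb_def]
    field_simp
    ring
  · simp [Pi.single_eq_of_ne (Ne.symm hk), Pi.single_eq_of_ne (Ne.symm hl)]

lemma rigid_spec (d : Fin n → ℝ) {i : Fin n} (h : ¬ ∃ q ∈ Dset d, q i = 0) :
    (∀ k, k ≠ i → 0 < d k) ∨ (∀ k, k ≠ i → d k < 0) := by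
  by_contra hc
  push_neg at hc
  obtain ⟨⟨k, hk, hk'⟩, ⟨l, hl, hl'⟩⟩ := hc
  exact h (exists_q_zero d hk hl hk' hl')

lemma rigid_unique (hn : 3 ≤ n) (d : Fin n → ℝ) (hne : (Dset d).Nonempty)
    {i j : Fin n} (hij : i ≠ j) :
    (∃ q ∈ Dset d, q i = 0) ∨ (∃ q ∈ Dset d, q j = 0) := by
  classical
  by_contra hc
  push_neg at hc
  have hri := rigid_spec d (by push_neg; exact hc.1)
  have hrj := rigid_spec d (by push_neg; exact hc.2)
  have hk0 : ∃ k : Fin n, k ≠ i ∧ k ≠ j := by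
    by_contra hk
    push_neg at hk
    have : (Finset.univ : Finset (Fin n)) ⊆ {i, j} := by
      intro m _
      rcases (em (m = i)) with h | h
      · simp [h]
      · simp [hk m h]
    have h2 : (Finset.univ : Finset (Fin n)).card ≤ ({i, j} : Finset (Fin n)).card :=
      Finset.card_le_card this
    have h3 : ({i, j} : Finset (Fin n)).card ≤ 2 :=
      (Finset.card_insert_le _ _).trans (by simp)
    simp only [Finset.card_univ, Fintype.card_fin] at h2
    omega
  obtain ⟨k, hki, hkj⟩ := hk0
  obtain ⟨q, hq⟩ := hne
  have hqpos : ∃ m, 0 < q m := by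
    by_contra hqp
    push_neg at hqp
    have hz : ∀ m, q m = 0 := fun m => le_antisymm (hqp m) (hq.1 m)
    have hs : ∑ m, q m = 0 := Finset.sum_eq_zero (fun m _ => hz m)
    rw [hq.2.1] at hs
    norm_num at hs
  obtain ⟨m₀, hm₀⟩ := hqpos
  -- all d same strict sign
  have hallpos : (∀ m, 0 < d m) ∨ (∀ m, d m < 0) := by
    rcases hri with hpos | hneg
    · left
      intro m
      by_cases hmi : m = i
      · subst hmi
        rcases hrj with hpos' | hneg'
        · exact hpos' m hij
        · exact absurd (hneg' k hkj) (not_lt.2 (hpos k hki).le)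
      · exact hpos m hmi
    · right
      intro m
      by_cases hmi : m = i
      · subst hmi
        rcases hrj with hpos' | hneg'
        · exact absurd (hpos' k hkj) (not_lt.2 (hneg k hki).le)
        · exact hneg' m hij
      · exact hneg m hmi
  have hsum := hq.2.2
  rcases hallpos with hp | hnn
  · have hlt : 0 < ∑ m, d m * q m := by
      apply Finset.sum_pos' (fun m _ => mul_nonneg (hp m).le (hq.1 m))
      exact ⟨m₀, Finset.mem_univ _, mul_pos (hp m₀) hm₀⟩
    linarith
  · have hlt : ∑ m, d m * q m < 0 := by
      have : 0 < ∑ m, (-(d m)) * q m := by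
        apply Finset.sum_pos' (fun m _ => mul_nonneg (by linarith [hnn m]) (hq.1 m))
        exact ⟨m₀, Finset.mem_univ _, mul_pos (by linarith [hnn m₀]) hm₀⟩
      have h2 : ∑ m, (-(d m)) * q m = -∑ m, d m * q m := by
        rw [← Finset.sum_neg_distrib]; exact Finset.sum_congr rfl fun m _ => by ring
      linarith [h2 ▸ this]
    linarith

lemma reach_aux (d : Fin n → ℝ) : ∀ (k : ℕ) (u : Fin n → ℝ), u ∈ Msph d → ∀ w ∈ Msph d,
    (∀ i, u i * w i < 0 → ∃ q ∈ Dset d, q i = 0) →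
    (Finset.univ.filter (fun i => u i * w i < 0)).card = k → JoinedIn (Msph d) u w := by
  classical
  intro k
  induction k with
  | zero =>
    intro u hu w hw _ hcard
    apply seg_path d hu hw
    intro i
    by_contra hneg
    have : i ∈ Finset.univ.filter (fun i => u i * w i < 0) := by
      simp [not_le.1 hneg]
    rw [Finset.card_eq_zero] at hcard
    simp [hcard] at this
  | succ k ih =>
    intro u hu w hw hflip hcard
    have hne : (Finset.univ.filter (fun i => u i * w i < 0)).Nonempty := by
      rw [← Finset.card_pos, hcard]; omega
    obtain ⟨i, hi⟩ := hne
    rw [Finset.mem_filter] at hi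
    obtain ⟨q, hq, hqi⟩ := hflip i hi.2
    set u' := Function.update u i (-(u i)) with hu'def
    have hj1 : JoinedIn (Msph d) u u' := flip_path d hu hq hqi
    have hu' : u' ∈ Msph d := hj1.target_mem
    have hfilter : Finset.univ.filter (fun j => u' j * w j < 0)
        = (Finset.univ.filter (fun j => u j * w j < 0)).erase i := by
      ext j
      simp only [Finset.mem_filter, Finset.mem_erase, Finset.mem_univ, true_and]
      by_cases h : j = i
      · subst h
        rw [hu'def, Function.update_self]
        constructor
        · intro hlt; nlinarith [hi.2]
        · intro ⟨h1, _⟩; exact absurd rfl h1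
      · rw [hu'def, Function.update_of_ne h]
        exact ⟨fun hlt => ⟨h, hlt⟩, fun ⟨_, hlt⟩ => hlt⟩
    have hflip' : ∀ j, u' j * w j < 0 → ∃ q ∈ Dset d, q j = 0 := by
      intro j hj
      have : j ∈ Finset.univ.filter (fun j => u' j * w j < 0) := by simp [hj]
      rw [hfilter, Finset.mem_erase, Finset.mem_filter] at this
      exact hflip j this.2.2
    have hcard' : (Finset.univ.filter (fun j => u' j * w j < 0)).card = k := by
      rw [hfilter, Finset.card_erase_of_mem (Finset.mem_filter.2 hi), hcard]
      omega
    exact hj1.trans (ih u' hu' w hw hflip' hcard')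

lemma neg_mem_Msph (d : Fin n → ℝ) {v : Fin n → ℝ} (hv : v ∈ Msph d) : -v ∈ Msph d := by
  constructor
  · rw [← hv.1]; exact Finset.sum_congr rfl fun i _ => by simp [neg_pow]
  · rw [← hv.2]; exact Finset.sum_congr rfl fun i _ => by simp [neg_pow]

lemma diag_path (hn : 3 ≤ n) (d : Fin n → ℝ) {u v : Fin n → ℝ}
    (hu : u ∈ Msph d) (hv : v ∈ Msph d) :
    JoinedIn (Msph d) u v ∨ JoinedIn (Msph d) u (-v) := by
  classical
  have hne : (Dset d).Nonempty := ⟨_, sq_mem_Dset d hu⟩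
  by_cases hex : ∃ i, u i * v i < 0 ∧ ¬ ∃ q ∈ Dset d, q i = 0
  · obtain ⟨i₀, hm₀, hrig₀⟩ := hex
    right
    apply reach_aux d _ u hu (-v) (neg_mem_Msph d hv) _ rfl
    intro j hj
    simp only [Pi.neg_apply] at hj
    by_contra hrigj
    have hji : j ≠ i₀ := by
      rintro rfl
      nlinarith
    rcases rigid_unique hn d hne hji with h | h
    · exact hrigj h
    · exact hrig₀ h
  · left
    push_neg at hex
    apply reach_aux d _ u hu v hv _ rfl
    intro j hj
    exact hex j hj


lemma quad_mul (A M : Matrix (Fin n) (Fin n) ℝ) (y : Fin n → ℝ) :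
    (A *ᵥ y) ⬝ᵥ M *ᵥ (A *ᵥ y) = y ⬝ᵥ (Aᵀ * M * A) *ᵥ y := by
  rw [Matrix.mulVec_mulVec, Matrix.dotProduct_mulVec, ← Matrix.vecMul_transpose,
    Matrix.vecMul_vecMul, ← Matrix.dotProduct_mulVec, Matrix.mul_assoc]

lemma sym_path (hn : 3 ≤ n) (C : Matrix (Fin n) (Fin n) ℝ) (hC : C.IsHermitian)
    {u v : Fin n → ℝ}
    (hu : u ∈ {x : Fin n → ℝ | x ⬝ᵥ x = 1 ∧ x ⬝ᵥ C *ᵥ x = 0})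
    (hv : v ∈ {x : Fin n → ℝ | x ⬝ᵥ x = 1 ∧ x ⬝ᵥ C *ᵥ x = 0}) :
    JoinedIn {x : Fin n → ℝ | x ⬝ᵥ x = 1 ∧ x ⬝ᵥ C *ᵥ x = 0} u v ∨
    JoinedIn {x : Fin n → ℝ | x ⬝ᵥ x = 1 ∧ x ⬝ᵥ C *ᵥ x = 0} u (-v) := by
  classical
  set MC := {x : Fin n → ℝ | x ⬝ᵥ x = 1 ∧ x ⬝ᵥ C *ᵥ x = 0} with hMC
  set U : Matrix (Fin n) (Fin n) ℝ := (hC.eigenvectorUnitary : Matrix (Fin n) (Fin n) ℝ)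
    with hU
  set d := hC.eigenvalues with hd
  have hspec : C = U * diagonal d * star U := by
    have := hC.spectral_theorem
    simpa using this
  have hUs : star U * U = 1 := Matrix.mem_unitaryGroup_iff'.mp (hC.eigenvectorUnitary).2
  have hsU : U * star U = 1 := Matrix.mem_unitaryGroup_iff.mp (hC.eigenvectorUnitary).2
  have hstar : star U = Uᵀ := by
    rw [Matrix.star_eq_conjTranspose]
    ext i j
    simp [Matrix.conjTranspose_apply]
  -- forward computations
  have hdot : ∀ y : Fin n → ℝ, (U *ᵥ y) ⬝ᵥ (U *ᵥ y) = ∑ i, (y i)^2 := by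
    intro y
    have : (U *ᵥ y) ⬝ᵥ (U *ᵥ y) = (U *ᵥ y) ⬝ᵥ (1 : Matrix (Fin n) (Fin n) ℝ) *ᵥ (U *ᵥ y) := by
      rw [Matrix.one_mulVec]
    rw [this, quad_mul, Matrix.mul_one, ← hstar, hUs, Matrix.one_mulVec]
    simp [dotProduct, pow_two]
  have hquadC : ∀ y : Fin n → ℝ, (U *ᵥ y) ⬝ᵥ C *ᵥ (U *ᵥ y) = ∑ i, d i * (y i)^2 := by
    intro y
    rw [quad_mul, ← hstar]
    have : star U * C * U = diagonal d := by
      rw [hspec]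
      rw [show star U * (U * diagonal d * star U) * U
          = (star U * U) * diagonal d * (star U * U) by noncomm_ring]
      rw [hUs, Matrix.one_mul, Matrix.mul_one]
    rw [this]
    simp only [dotProduct, Matrix.mulVec_diagonal]
    exact Finset.sum_congr rfl fun i _ => by ring
  have hmem : ∀ y : Fin n → ℝ, y ∈ Msph d → U *ᵥ y ∈ MC := by
    intro y hy
    exact ⟨by rw [hdot y]; exact hy.1, by rw [hquadC y]; exact hy.2⟩
  have hT : ∀ x : Fin n → ℝ, U *ᵥ (star U *ᵥ x) = x := by
    intro x
    rw [Matrix.mulVec_mulVec, hsU, Matrix.one_mulVec]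
  set yu := star U *ᵥ u with hyu
  set yv := star U *ᵥ v with hyv
  have hyumem : yu ∈ Msph d := by
    constructor
    · rw [← hdot yu, hT]; exact hu.1
    · rw [← hquadC yu, hT]; exact hu.2
  have hyvmem : yv ∈ Msph d := by
    constructor
    · rw [← hdot yv, hT]; exact hv.1
    · rw [← hquadC yv, hT]; exact hv.2
  have hcont : Continuous fun y : Fin n → ℝ => U *ᵥ y := by
    have : (fun y : Fin n → ℝ => U *ᵥ y) = (Matrix.mulVecLin U : (Fin n → ℝ) →ₗ[ℝ] (Fin n → ℝ)) := by
      funext y; simp [Matrix.mulVecLin_apply]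
    rw [this]
    exact LinearMap.continuous_of_finiteDimensional _
  have himg : (fun y : Fin n → ℝ => U *ᵥ y) '' Msph d ⊆ MC := by
    rintro _ ⟨y, hy, rfl⟩
    exact hmem y hy
  rcases diag_path hn d hyumem hyvmem with h | h
  · left
    have := (h.map hcont).mono himg
    rwa [hT, hT] at this
  · right
    have := (h.map hcont).mono himg
    rw [hT] at this
    rwa [Matrix.mulVec_neg, hT] at this
lemma quad_comb (Q R : Matrix (Fin n) (Fin n) ℝ) (a₁ a₂ b : ℝ) (x : Fin n → ℝ) :
    x ⬝ᵥ (a₁ • Q + a₂ • R - b • (1 : Matrix (Fin n) (Fin n) ℝ)) *ᵥ x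
      = a₁ * (x ⬝ᵥ Q *ᵥ x) + a₂ * (x ⬝ᵥ R *ᵥ x) - b * (x ⬝ᵥ x) := by
  rw [Matrix.sub_mulVec, Matrix.add_mulVec, Matrix.smul_mulVec, Matrix.smul_mulVec,
    Matrix.smul_mulVec, Matrix.one_mulVec, dotProduct_sub, dotProduct_add,
    dotProduct_smul, dotProduct_smul, dotProduct_smul]
  simp [smul_eq_mul]

lemma isHermitian_of_isSymm {A : Matrix (Fin n) (Fin n) ℝ} (h : A.IsSymm) : A.IsHermitian := by
  rwa [Matrix.IsHermitian, Matrix.conjTranspose, Matrix.IsSymm] at *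

lemma cont_quad (Q : Matrix (Fin n) (Fin n) ℝ) : Continuous fun x : Fin n → ℝ => x ⬝ᵥ Q *ᵥ x := by
  have : (fun x : Fin n → ℝ => x ⬝ᵥ Q *ᵥ x) = fun x => ∑ i, x i * (∑ j, Q i j * x j) := by
    funext x
    simp [dotProduct, Matrix.mulVec, dotProduct]
  rw [this]
  continuity

lemma brickman (hn : 3 ≤ n) (Q R : Matrix (Fin n) (Fin n) ℝ) (hQ : Q.IsSymm) (hR : R.IsSymm)
    {u v : Fin n → ℝ} (hu : u ⬝ᵥ u = 1) (hv : v ⬝ᵥ v = 1) {t : ℝ} (ht0 : 0 ≤ t) (ht1 : t ≤ 1) :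
    ∃ x : Fin n → ℝ, x ⬝ᵥ x = 1 ∧
      x ⬝ᵥ Q *ᵥ x = (1-t) * (u ⬝ᵥ Q *ᵥ u) + t * (v ⬝ᵥ Q *ᵥ v) ∧
      x ⬝ᵥ R *ᵥ x = (1-t) * (u ⬝ᵥ R *ᵥ u) + t * (v ⬝ᵥ R *ᵥ v) := by
  classical
  obtain ⟨p₁, hp₁⟩ : ∃ a, u ⬝ᵥ Q *ᵥ u = a := ⟨_, rfl⟩
  obtain ⟨p₂, hp₂⟩ : ∃ a, u ⬝ᵥ R *ᵥ u = a := ⟨_, rfl⟩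
  obtain ⟨q₁, hq₁⟩ : ∃ a, v ⬝ᵥ Q *ᵥ v = a := ⟨_, rfl⟩
  obtain ⟨q₂, hq₂⟩ : ∃ a, v ⬝ᵥ R *ᵥ v = a := ⟨_, rfl⟩
  rw [hp₁, hp₂, hq₁, hq₂]
  by_cases hpq : p₁ = q₁ ∧ p₂ = q₂
  · exact ⟨u, hu, by rw [hp₁, ← hpq.1]; ring, by rw [hp₂, ← hpq.2]; ring⟩
  have hd : 0 < (q₁ - p₁)^2 + (q₂ - p₂)^2 := by
    rcases not_and_or.1 hpq with h | h
    · have h1 : q₁ - p₁ ≠ 0 := fun hc => h (by linarith)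
      positivity
    · have h1 : q₂ - p₂ ≠ 0 := fun hc => h (by linarith)
      positivity
  set C := (-(q₂ - p₂)) • Q + (q₁ - p₁) • R
      - ((-(q₂ - p₂)) * p₁ + (q₁ - p₁) * p₂) • (1 : Matrix (Fin n) (Fin n) ℝ) with hC
  have hCsymm : C.IsSymm := by
    rw [Matrix.IsSymm, hC]
    rw [Matrix.transpose_sub, Matrix.transpose_add, Matrix.transpose_smul, Matrix.transpose_smul,
      Matrix.transpose_smul, Matrix.transpose_one, hQ.eq, hR.eq]
  have hCU : u ⬝ᵥ C *ᵥ u = 0 := by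
    rw [hC, quad_comb, hu, hp₁, hp₂]; ring
  have hCV : v ⬝ᵥ C *ᵥ v = 0 := by
    rw [hC, quad_comb, hv, hq₁, hq₂]; ring
  have hpath := sym_path hn C (isHermitian_of_isSymm hCsymm) ⟨hu, hCU⟩ ⟨hv, hCV⟩
  have hkey : ∃ w : Fin n → ℝ, (w ⬝ᵥ Q *ᵥ w = q₁ ∧ w ⬝ᵥ R *ᵥ w = q₂) ∧
      JoinedIn {x : Fin n → ℝ | x ⬝ᵥ x = 1 ∧ x ⬝ᵥ C *ᵥ x = 0} u w := by
    rcases hpath with h | h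
    · exact ⟨v, ⟨hq₁, hq₂⟩, h⟩
    · refine ⟨-v, ⟨?_, ?_⟩, h⟩
      · rw [← hq₁]; simp [Matrix.mulVec_neg]
      · rw [← hq₂]; simp [Matrix.mulVec_neg]
  obtain ⟨w, ⟨hwQ, hwR⟩, hjoin⟩ := hkey
  obtain ⟨γ, hγ⟩ := hjoin
  have hf0 : γ.extend 0 = u := γ.extend_zero
  have hf1 : γ.extend 1 = w := γ.extend_one
  have hfmem : ∀ s : ℝ, γ.extend s ⬝ᵥ γ.extend s = 1 ∧ γ.extend s ⬝ᵥ C *ᵥ γ.extend s = 0 :=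
    fun s => hγ _
  set h : ℝ → ℝ := fun s => (q₁ - p₁) * ((γ.extend s) ⬝ᵥ Q *ᵥ (γ.extend s))
      + (q₂ - p₂) * ((γ.extend s) ⬝ᵥ R *ᵥ (γ.extend s)) with hh
  have hcont : Continuous h := by
    apply Continuous.add
    · exact continuous_const.mul ((cont_quad Q).comp γ.continuous_extend)
    · exact continuous_const.mul ((cont_quad R).comp γ.continuous_extend)
  have hh0 : h 0 = (q₁ - p₁) * p₁ + (q₂ - p₂) * p₂ := by
    rw [hh]; simp only; rw [hf0, hp₁, hp₂]
  have hh1 : h 1 = (q₁ - p₁) * q₁ + (q₂ - p₂) * q₂ := by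
    rw [hh]; simp only; rw [hf1, hwQ, hwR]
  have hivt := intermediate_value_Icc (by norm_num : (0:ℝ) ≤ 1) hcont.continuousOn
  have htgt : (q₁ - p₁) * p₁ + (q₂ - p₂) * p₂ + t * ((q₁ - p₁)^2 + (q₂ - p₂)^2)
      ∈ Set.Icc (h 0) (h 1) := by
    rw [hh0, hh1]
    constructor
    · nlinarith [hd]
    · nlinarith [hd]
  obtain ⟨s₀, _, hs₀⟩ := hivt htgt
  have hxmem := hfmem s₀
  have hx1 : γ.extend s₀ ⬝ᵥ γ.extend s₀ = 1 := hxmem.1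
  have hxC : (-(q₂ - p₂)) * (γ.extend s₀ ⬝ᵥ Q *ᵥ γ.extend s₀)
      + (q₁ - p₁) * (γ.extend s₀ ⬝ᵥ R *ᵥ γ.extend s₀)
      - ((-(q₂ - p₂)) * p₁ + (q₁ - p₁) * p₂) = 0 := by
    have h2 := hxmem.2
    rw [hC, quad_comb, hx1, mul_one] at h2
    linarith
  have hxD : (q₁ - p₁) * (γ.extend s₀ ⬝ᵥ Q *ᵥ γ.extend s₀)
      + (q₂ - p₂) * (γ.extend s₀ ⬝ᵥ R *ᵥ γ.extend s₀)
      = (q₁ - p₁) * p₁ + (q₂ - p₂) * p₂ + t * ((q₁ - p₁)^2 + (q₂ - p₂)^2) := hs₀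
  refine ⟨γ.extend s₀, hx1, ?_, ?_⟩
  · apply mul_left_cancel₀ (ne_of_gt hd)
    linear_combination (q₁ - p₁) * hxD - (q₂ - p₂) * hxC
  · apply mul_left_cancel₀ (ne_of_gt hd)
    linear_combination (q₂ - p₂) * hxD + (q₁ - p₁) * hxC
lemma isSymm_of_isHermitian {A : Matrix (Fin n) (Fin n) ℝ} (h : A.IsHermitian) : A.IsSymm := by
  rwa [Matrix.IsHermitian, Matrix.conjTranspose, Matrix.IsSymm] at *

lemma quad_smul (M : Matrix (Fin n) (Fin n) ℝ) (c : ℝ) (x : Fin n → ℝ) :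
    (c • x) ⬝ᵥ M *ᵥ (c • x) = c^2 * (x ⬝ᵥ M *ᵥ x) := by
  rw [Matrix.mulVec_smul, dotProduct_smul, smul_dotProduct]
  simp [smul_eq_mul]; ring

lemma dot_self_eq_quad_one (x : Fin n → ℝ) :
    x ⬝ᵥ x = x ⬝ᵥ (1 : Matrix (Fin n) (Fin n) ℝ) *ᵥ x := by
  rw [Matrix.one_mulVec]

lemma polyak_core (hn : 3 ≤ n) (P Q R : Matrix (Fin n) (Fin n) ℝ)
    (hQs : Q.IsSymm) (hRs : R.IsSymm) (hP : P.PosDef)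
    {y z : Fin 3 → ℝ}
    (hy : ∃ x : Fin n → ℝ, y 0 = x ⬝ᵥ P *ᵥ x ∧ y 1 = x ⬝ᵥ Q *ᵥ x ∧ y 2 = x ⬝ᵥ R *ᵥ x)
    (hz : ∃ x : Fin n → ℝ, z 0 = x ⬝ᵥ P *ᵥ x ∧ z 1 = x ⬝ᵥ Q *ᵥ x ∧ z 2 = x ⬝ᵥ R *ᵥ x)
    {a b : ℝ} (ha : 0 ≤ a) (hb : 0 ≤ b) (hab : a + b = 1) :
    ∃ x : Fin n → ℝ, a * y 0 + b * z 0 = x ⬝ᵥ P *ᵥ x ∧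
      a * y 1 + b * z 1 = x ⬝ᵥ Q *ᵥ x ∧ a * y 2 + b * z 2 = x ⬝ᵥ R *ᵥ x := by
  classical
  obtain ⟨x₁, hy0, hy1, hy2⟩ := hy
  obtain ⟨x₂, hz0, hz1, hz2⟩ := hz
  have hy0n : 0 ≤ y 0 := by
    rw [hy0]
    by_cases hx : x₁ = 0
    · simp [hx]
    · exact (by have h := hP.dotProduct_mulVec_pos hx; rw [star_trivial] at h; exact h.le)
  have hz0n : 0 ≤ z 0 := by
    rw [hz0]
    by_cases hx : x₂ = 0
    · simp [hx]
    · exact (by have h := hP.dotProduct_mulVec_pos hx; rw [star_trivial] at h; exact h.le)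
  have hdeg : ∀ (c : ℝ) (w : Fin 3 → ℝ) (x : Fin n → ℝ), 0 ≤ c →
      w 0 = x ⬝ᵥ P *ᵥ x → w 1 = x ⬝ᵥ Q *ᵥ x → w 2 = x ⬝ᵥ R *ᵥ x → c * w 0 = 0 →
      (c * w 0 = 0 ∧ c * w 1 = 0 ∧ c * w 2 = 0) := by
    intro c w x hc h0 h1 h2 hcw
    rcases mul_eq_zero.1 hcw with hc0 | hw0
    · exact ⟨by rw [hc0]; ring, by rw [hc0]; ring, by rw [hc0]; ring⟩
    · have hx0 : x = 0 := by
        by_contra hx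
        have h3 : (0:ℝ) < x ⬝ᵥ P *ᵥ x := by
          have h := hP.dotProduct_mulVec_pos hx; rwa [star_trivial] at h
        rw [← h0, hw0] at h3
        exact lt_irrefl 0 h3
      subst hx0
      simp only [Matrix.mulVec_zero, dotProduct_zero] at h0 h1 h2
      exact ⟨by rw [hw0]; ring, by rw [h1]; ring, by rw [h2]; ring⟩
  by_cases hay : a * y 0 = 0
  · obtain ⟨e0, e1, e2⟩ := hdeg a y x₁ ha hy0 hy1 hy2 hay
    refine ⟨Real.sqrt b • x₂, ?_, ?_, ?_⟩
    · rw [quad_smul, Real.sq_sqrt hb, e0, ← hz0]; ring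
    · rw [quad_smul, Real.sq_sqrt hb, e1, ← hz1]; ring
    · rw [quad_smul, Real.sq_sqrt hb, e2, ← hz2]; ring
  by_cases hbz : b * z 0 = 0
  · obtain ⟨e0, e1, e2⟩ := hdeg b z x₂ hb hz0 hz1 hz2 hbz
    refine ⟨Real.sqrt a • x₁, ?_, ?_, ?_⟩
    · rw [quad_smul, Real.sq_sqrt ha, e0, ← hy0]; ring
    · rw [quad_smul, Real.sq_sqrt ha, e1, ← hy1]; ring
    · rw [quad_smul, Real.sq_sqrt ha, e2, ← hy2]; ring
  have hapos : 0 < a := ha.lt_of_ne (fun h => hay (by rw [← h]; ring))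
  have hbpos : 0 < b := hb.lt_of_ne (fun h => hbz (by rw [← h]; ring))
  have hy0pos : 0 < y 0 := hy0n.lt_of_ne (fun h => hay (by rw [← h]; ring))
  have hz0pos : 0 < z 0 := hz0n.lt_of_ne (fun h => hbz (by rw [← h]; ring))
  obtain ⟨S, hSS, hSsymm⟩ : ∃ S : Matrix (Fin n) (Fin n) ℝ, S * S = P ∧ S.IsSymm := by
    open scoped MatrixOrder in
    exact ⟨CFC.sqrt P, CFC.sqrt_mul_sqrt_self P hP.posSemidef.nonneg,
      isSymm_of_isHermitian (CFC.sqrt_nonneg P).posSemidef.isHermitian⟩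
  have hdet : IsUnit S.det := by
    have h1 : S.det * S.det = P.det := by rw [← Matrix.det_mul, hSS]
    have h2 : 0 < P.det := hP.det_pos
    rw [isUnit_iff_ne_zero]
    intro h
    rw [h, mul_zero] at h1
    linarith
  have hSi1 : S * S⁻¹ = 1 := Matrix.mul_nonsing_inv S hdet
  have hSi2 : S⁻¹ * S = 1 := Matrix.nonsing_inv_mul S hdet
  have hSit : (S⁻¹)ᵀ = S⁻¹ := by rw [Matrix.transpose_nonsing_inv, hSsymm.eq]
  set Q' := S⁻¹ᵀ * Q * S⁻¹ with hQ'def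
  set R' := S⁻¹ᵀ * R * S⁻¹ with hR'def
  have hQ's : Q'.IsSymm := by
    rw [Matrix.IsSymm, hQ'def, Matrix.transpose_mul, Matrix.transpose_mul,
      Matrix.transpose_transpose, hQs.eq, hSit]
    rw [Matrix.mul_assoc]
  have hR's : R'.IsSymm := by
    rw [Matrix.IsSymm, hR'def, Matrix.transpose_mul, Matrix.transpose_mul,
      Matrix.transpose_transpose, hRs.eq, hSit]
    rw [Matrix.mul_assoc]
  have hStSQ : ∀ x : Fin n → ℝ, (S *ᵥ x) ⬝ᵥ Q' *ᵥ (S *ᵥ x) = x ⬝ᵥ Q *ᵥ x := by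
    intro x
    rw [quad_mul, hSsymm.eq, hQ'def, hSit]
    rw [show S * (S⁻¹ * Q * S⁻¹) * S = (S * S⁻¹) * Q * (S⁻¹ * S) by noncomm_ring]
    rw [hSi1, hSi2, Matrix.one_mul, Matrix.mul_one]
  have hStSR : ∀ x : Fin n → ℝ, (S *ᵥ x) ⬝ᵥ R' *ᵥ (S *ᵥ x) = x ⬝ᵥ R *ᵥ x := by
    intro x
    rw [quad_mul, hSsymm.eq, hR'def, hSit]
    rw [show S * (S⁻¹ * R * S⁻¹) * S = (S * S⁻¹) * R * (S⁻¹ * S) by noncomm_ring]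
    rw [hSi1, hSi2, Matrix.one_mul, Matrix.mul_one]
  have hStS1 : ∀ x : Fin n → ℝ, (S *ᵥ x) ⬝ᵥ (S *ᵥ x) = x ⬝ᵥ P *ᵥ x := by
    intro x
    rw [dot_self_eq_quad_one (S *ᵥ x), quad_mul, hSsymm.eq, Matrix.mul_one, hSS]
  set e₁ : Fin n → ℝ := (1 / Real.sqrt (y 0)) • (S *ᵥ x₁) with he₁
  set e₂ : Fin n → ℝ := (1 / Real.sqrt (z 0)) • (S *ᵥ x₂) with he₂
  have hsq1 : Real.sqrt (y 0) ^ 2 = y 0 := Real.sq_sqrt hy0n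
  have hsq2 : Real.sqrt (z 0) ^ 2 = z 0 := Real.sq_sqrt hz0n
  have hsqrt1pos : 0 < Real.sqrt (y 0) := Real.sqrt_pos.2 hy0pos
  have hsqrt2pos : 0 < Real.sqrt (z 0) := Real.sqrt_pos.2 hz0pos
  have he₁unit : e₁ ⬝ᵥ e₁ = 1 := by
    rw [he₁, dot_self_eq_quad_one, quad_smul, ← dot_self_eq_quad_one, hStS1, ← hy0]
    field_simp
    exact hsq1.symm
  have he₂unit : e₂ ⬝ᵥ e₂ = 1 := by
    rw [he₂, dot_self_eq_quad_one, quad_smul, ← dot_self_eq_quad_one, hStS1, ← hz0]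
    field_simp
    exact hsq2.symm
  have he₁Q : e₁ ⬝ᵥ Q' *ᵥ e₁ = y 1 / y 0 := by
    rw [he₁, quad_smul, hStSQ, ← hy1, div_pow, one_pow, hsq1]
    ring
  have he₂Q : e₂ ⬝ᵥ Q' *ᵥ e₂ = z 1 / z 0 := by
    rw [he₂, quad_smul, hStSQ, ← hz1, div_pow, one_pow, hsq2]
    ring
  have he₁R : e₁ ⬝ᵥ R' *ᵥ e₁ = y 2 / y 0 := by
    rw [he₁, quad_smul, hStSR, ← hy2, div_pow, one_pow, hsq1]
    ring
  have he₂R : e₂ ⬝ᵥ R' *ᵥ e₂ = z 2 / z 0 := by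
    rw [he₂, quad_smul, hStSR, ← hz2, div_pow, one_pow, hsq2]
    ring
  set w0 := a * y 0 + b * z 0 with hw0
  have hw0pos : 0 < w0 := by positivity
  set t := b * z 0 / w0 with ht
  have ht0 : 0 ≤ t := by positivity
  have ht1 : t ≤ 1 := by
    rw [ht, div_le_one hw0pos, hw0]
    nlinarith
  obtain ⟨ze, hzeunit, hzeQ, hzeR⟩ := brickman hn Q' R' hQ's hR's he₁unit he₂unit ht0 ht1
  refine ⟨Real.sqrt w0 • (S⁻¹ *ᵥ ze), ?_, ?_, ?_⟩
  · rw [quad_smul, Real.sq_sqrt hw0pos.le, quad_mul, hSit]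
    rw [show S⁻¹ * P * S⁻¹ = S⁻¹ * (S * S) * S⁻¹ by rw [hSS]]
    rw [show S⁻¹ * (S * S) * S⁻¹ = (S⁻¹ * S) * (S * S⁻¹) by noncomm_ring]
    rw [hSi2, hSi1, Matrix.one_mul, ← dot_self_eq_quad_one, hzeunit, hw0]
    ring
  · rw [quad_smul, Real.sq_sqrt hw0pos.le, quad_mul, hSit,
      show S⁻¹ * Q * S⁻¹ = Q' by rw [hQ'def, hSit], hzeQ, he₁Q, he₂Q]
    rw [ht, hw0]
    field_simp
    ring
  · rw [quad_smul, Real.sq_sqrt hw0pos.le, quad_mul, hSit,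
      show S⁻¹ * R * S⁻¹ = R' by rw [hR'def, hSit], hzeR, he₁R, he₂R]
    rw [ht, hw0]
    field_simp
    ring
lemma quad_comb3 (A₀ A₁ A₂ : Matrix (Fin n) (Fin n) ℝ) (c₁ c₂ : ℝ) (x : Fin n → ℝ) :
    x ⬝ᵥ (A₀ + c₁ • A₁ + c₂ • A₂) *ᵥ x
      = x ⬝ᵥ A₀ *ᵥ x + c₁ * (x ⬝ᵥ A₁ *ᵥ x) + c₂ * (x ⬝ᵥ A₂ *ᵥ x) := by
  rw [Matrix.add_mulVec, Matrix.add_mulVec, Matrix.smul_mulVec, Matrix.smul_mulVec,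
    dotProduct_add, dotProduct_add, dotProduct_smul, dotProduct_smul]
  simp [smul_eq_mul]

lemma quad_smul3 (A₀ A₁ A₂ : Matrix (Fin n) (Fin n) ℝ) (s₀ s₁ s₂ : ℝ) (x : Fin n → ℝ) :
    x ⬝ᵥ (s₀ • A₀ + s₁ • A₁ + s₂ • A₂) *ᵥ x
      = s₀ * (x ⬝ᵥ A₀ *ᵥ x) + s₁ * (x ⬝ᵥ A₁ *ᵥ x) + s₂ * (x ⬝ᵥ A₂ *ᵥ x) := by
  rw [Matrix.add_mulVec, Matrix.add_mulVec, Matrix.smul_mulVec, Matrix.smul_mulVec,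
    Matrix.smul_mulVec, dotProduct_add, dotProduct_add, dotProduct_smul, dotProduct_smul,
    dotProduct_smul]
  simp [smul_eq_mul]

lemma polyak_W_convex (hn : 3 ≤ n) (A₀ A₁ A₂ : Matrix (Fin n) (Fin n) ℝ)
    (h₀ : A₀.IsSymm) (h₁ : A₁.IsSymm) (h₂ : A₂.IsSymm)
    (hs : ∃ s₀ s₁ s₂ : ℝ, (s₀ • A₀ + s₁ • A₁ + s₂ • A₂).PosDef) :
    Convex ℝ {y : Fin 3 → ℝ | ∃ x : Fin n → ℝ,
      y 0 = x ⬝ᵥ A₀ *ᵥ x ∧ y 1 = x ⬝ᵥ A₁ *ᵥ x ∧ y 2 = x ⬝ᵥ A₂ *ᵥ x} := by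
  obtain ⟨s₀, s₁, s₂, hPD⟩ := hs
  set P := s₀ • A₀ + s₁ • A₁ + s₂ • A₂ with hPdef
  intro y hy z hz a b ha hb hab
  obtain ⟨x₁, hy0, hy1, hy2⟩ := hy
  obtain ⟨x₂, hz0, hz1, hz2⟩ := hz
  simp only [Set.mem_setOf_eq, Pi.add_apply, Pi.smul_apply, smul_eq_mul]
  -- the three symmetric cases
  have hsne : s₀ ≠ 0 ∨ s₁ ≠ 0 ∨ s₂ ≠ 0 := by
    by_contra hc
    push_neg at hc
    obtain ⟨e0, e1, e2⟩ := hc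
    have hx : (fun _ => 1 : Fin n → ℝ) ≠ 0 := by
      intro h
      have := congrFun h ⟨0, by omega⟩
      norm_num at this
    have hpos : (0:ℝ) < (fun _ => 1 : Fin n → ℝ) ⬝ᵥ P *ᵥ (fun _ => 1) := by
      have h := hPD.dotProduct_mulVec_pos hx; rwa [star_trivial] at h
    rw [hPdef, quad_smul3, e0, e1, e2] at hpos
    norm_num at hpos
  rcases hsne with hs0 | hs1 | hs2
  · -- use core with (P, A₁, A₂)
    have hcore := polyak_core hn P A₁ A₂ h₁ h₂ hPD
      (y := ![s₀ * y 0 + s₁ * y 1 + s₂ * y 2, y 1, y 2])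
      (z := ![s₀ * z 0 + s₁ * z 1 + s₂ * z 2, z 1, z 2])
      ⟨x₁, by simp [hPdef, quad_smul3, hy0, hy1, hy2], by simp [hy1], by simp [hy2]⟩
      ⟨x₂, by simp [hPdef, quad_smul3, hz0, hz1, hz2], by simp [hz1], by simp [hz2]⟩
      ha hb hab
    obtain ⟨x, hP0, hP1, hP2⟩ := hcore
    simp only [Matrix.cons_val_zero, Matrix.cons_val_one, Matrix.head_cons,
      Matrix.cons_val_two, Matrix.tail_cons] at hP0 hP1 hP2
    refine ⟨x, ?_, hP1, hP2⟩
    rw [hPdef, quad_smul3] at hP0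
    have : s₀ * (x ⬝ᵥ A₀ *ᵥ x) = s₀ * (a * y 0 + b * z 0) := by
      rw [← hP1, ← hP2] at hP0
      linarith
    have h := mul_left_cancel₀ hs0 this
    linarith [h]
  · have hcore := polyak_core hn P A₀ A₂ h₀ h₂ hPD
      (y := ![s₀ * y 0 + s₁ * y 1 + s₂ * y 2, y 0, y 2])
      (z := ![s₀ * z 0 + s₁ * z 1 + s₂ * z 2, z 0, z 2])
      ⟨x₁, by simp [hPdef, quad_smul3, hy0, hy1, hy2], by simp [hy0], by simp [hy2]⟩
      ⟨x₂, by simp [hPdef, quad_smul3, hz0, hz1, hz2], by simp [hz0], by simp [hz2]⟩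
      ha hb hab
    obtain ⟨x, hP0, hP1, hP2⟩ := hcore
    simp only [Matrix.cons_val_zero, Matrix.cons_val_one, Matrix.head_cons,
      Matrix.cons_val_two, Matrix.tail_cons] at hP0 hP1 hP2
    refine ⟨x, hP1, ?_, hP2⟩
    rw [hPdef, quad_smul3] at hP0
    have : s₁ * (x ⬝ᵥ A₁ *ᵥ x) = s₁ * (a * y 1 + b * z 1) := by
      rw [← hP1, ← hP2] at hP0
      linarith
    have h := mul_left_cancel₀ hs1 this
    linarith [h]
  · have hcore := polyak_core hn P A₀ A₁ h₀ h₁ hPD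
      (y := ![s₀ * y 0 + s₁ * y 1 + s₂ * y 2, y 0, y 1])
      (z := ![s₀ * z 0 + s₁ * z 1 + s₂ * z 2, z 0, z 1])
      ⟨x₁, by simp [hPdef, quad_smul3, hy0, hy1, hy2], by simp [hy0], by simp [hy1]⟩
      ⟨x₂, by simp [hPdef, quad_smul3, hz0, hz1, hz2], by simp [hz0], by simp [hz1]⟩
      ha hb hab
    obtain ⟨x, hP0, hP1, hP2⟩ := hcore
    simp only [Matrix.cons_val_zero, Matrix.cons_val_one, Matrix.head_cons,
      Matrix.cons_val_two, Matrix.tail_cons] at hP0 hP1 hP2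
    refine ⟨x, hP1, hP2, ?_⟩
    rw [hPdef, quad_smul3] at hP0
    have : s₂ * (x ⬝ᵥ A₂ *ᵥ x) = s₂ * (a * y 2 + b * z 2) := by
      rw [← hP1, ← hP2] at hP0
      linarith
    have h := mul_left_cancel₀ hs2 this
    linarith [h]

lemma corner_approx (r mm MM : ℝ) (h : mm < MM) {ε : ℝ} (hε : 0 < ε) :
    ∃ yy : ℝ, mm < yy ∧ yy < MM ∧ max (r*mm) (r*MM) ≤ r*yy + ε := by
  rcases le_total 0 r with hr | hr
  · set δ := min ((MM - mm)/2) (ε/(r+1)) with hδ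
    have hδpos : 0 < δ := lt_min (by linarith) (by positivity)
    have hδ1 : δ ≤ (MM - mm)/2 := min_le_left _ _
    have hδ2 : δ ≤ ε/(r+1) := min_le_right _ _
    refine ⟨MM - δ, by linarith, by linarith, ?_⟩
    rw [max_eq_right (mul_le_mul_of_nonneg_left h.le hr)]
    have hrδ : r * δ ≤ ε := by
      have h1 : r * δ ≤ r * (ε/(r+1)) := mul_le_mul_of_nonneg_left hδ2 hr
      have h2 : r * (ε/(r+1)) ≤ ε := by
        rw [mul_div_assoc']
        rw [div_le_iff₀ (by linarith : (0:ℝ) < r + 1)]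
        nlinarith
      linarith
    nlinarith
  · set δ := min ((MM - mm)/2) (ε/(-r+1)) with hδ
    have hδpos : 0 < δ := lt_min (by linarith) (div_pos hε (by linarith))
    have hδ1 : δ ≤ (MM - mm)/2 := min_le_left _ _
    have hδ2 : δ ≤ ε/(-r+1) := min_le_right _ _
    refine ⟨mm + δ, by linarith, by linarith, ?_⟩
    rw [max_eq_left (mul_le_mul_of_nonpos_left h.le hr)]
    have hrδ : -r * δ ≤ ε := by
      have h1 : -r * δ ≤ -r * (ε/(-r+1)) := mul_le_mul_of_nonneg_left hδ2 (by linarith)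
      have h2 : -r * (ε/(-r+1)) ≤ ε := by
        rw [mul_div_assoc']
        rw [div_le_iff₀ (by linarith : (0:ℝ) < -r + 1)]
        nlinarith
      linarith
    nlinarith

set_option maxHeartbeats 1000000

theorem strong_duality_HQPB (n : ℕ) (hn : 3 ≤ n)
    (A₀ A₁ A₂ : Matrix (Fin n) (Fin n) ℝ)
    (h₀ : A₀.IsSymm) (h₁ : A₁.IsSymm) (h₂ : A₂.IsSymm)
    (hs : ∃ s₀ s₁ s₂ : ℝ, (s₀ • A₀ + s₁ • A₁ + s₂ • A₂).PosDef)
    (m₁ M₁ m₂ M₂ : ℝ) (hb₁ : m₁ < M₁) (hb₂ : m₂ < M₂)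
    (hslater : ∃ xt : Fin n → ℝ,
      m₁ < xt ⬝ᵥ A₁ *ᵥ xt ∧ xt ⬝ᵥ A₁ *ᵥ xt < M₁ ∧
      m₂ < xt ⬝ᵥ A₂ *ᵥ xt ∧ xt ⬝ᵥ A₂ *ᵥ xt < M₂) :
    sInf {v : EReal | ∃ x : Fin n → ℝ,
        m₁ ≤ x ⬝ᵥ A₁ *ᵥ x ∧ x ⬝ᵥ A₁ *ᵥ x ≤ M₁ ∧
        m₂ ≤ x ⬝ᵥ A₂ *ᵥ x ∧ x ⬝ᵥ A₂ *ᵥ x ≤ M₂ ∧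
        v = (x ⬝ᵥ A₀ *ᵥ x : ℝ)} =
    sSup {v : EReal | ∃ lam₁ mu₁ lam₂ mu₂ : ℝ,
        0 ≤ lam₁ ∧ 0 ≤ mu₁ ∧ 0 ≤ lam₂ ∧ 0 ≤ mu₂ ∧
        (A₀ + (mu₁ - lam₁) • A₁ + (mu₂ - lam₂) • A₂).PosSemidef ∧
        v = (lam₁ * m₁ - mu₁ * M₁ + lam₂ * m₂ - mu₂ * M₂ : ℝ)} := by
  classical
  obtain ⟨xt, hsl1, hsl2, hsl3, hsl4⟩ := hslater
  set Pset : Set EReal := {v : EReal | ∃ x : Fin n → ℝ,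
      m₁ ≤ x ⬝ᵥ A₁ *ᵥ x ∧ x ⬝ᵥ A₁ *ᵥ x ≤ M₁ ∧
      m₂ ≤ x ⬝ᵥ A₂ *ᵥ x ∧ x ⬝ᵥ A₂ *ᵥ x ≤ M₂ ∧
      v = (x ⬝ᵥ A₀ *ᵥ x : ℝ)} with hPset
  set Dset : Set EReal := {v : EReal | ∃ lam₁ mu₁ lam₂ mu₂ : ℝ,
      0 ≤ lam₁ ∧ 0 ≤ mu₁ ∧ 0 ≤ lam₂ ∧ 0 ≤ mu₂ ∧
      (A₀ + (mu₁ - lam₁) • A₁ + (mu₂ - lam₂) • A₂).PosSemidef ∧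
      v = (lam₁ * m₁ - mu₁ * M₁ + lam₂ * m₂ - mu₂ * M₂ : ℝ)} with hDset
  have hxtmem : (↑(xt ⬝ᵥ A₀ *ᵥ xt) : EReal) ∈ Pset :=
    ⟨xt, hsl1.le, hsl2.le, hsl3.le, hsl4.le, rfl⟩
  have hweak : sSup Dset ≤ sInf Pset := by
    apply sSup_le
    rintro d ⟨l1, u1, l2, u2, hl1, hu1, hl2, hu2, hpsd, rfl⟩
    apply le_sInf
    rintro p ⟨x, hx1, hx2, hx3, hx4, rfl⟩
    rw [EReal.coe_le_coe_iff]
    have hq : (0:ℝ) ≤ x ⬝ᵥ (A₀ + (u1 - l1) • A₁ + (u2 - l2) • A₂) *ᵥ x := by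
      have h := hpsd.dotProduct_mulVec_nonneg x; rwa [star_trivial] at h
    rw [quad_comb3] at hq
    nlinarith [mul_nonneg hl1 (sub_nonneg.2 hx1), mul_nonneg hu1 (sub_nonneg.2 hx2),
      mul_nonneg hl2 (sub_nonneg.2 hx3), mul_nonneg hu2 (sub_nonneg.2 hx4)]
  refine le_antisymm ?_ hweak
  by_cases hbot : sInf Pset = ⊥
  · rw [hbot]; exact bot_le
  have htop : sInf Pset ≠ ⊤ := by
    intro h
    have h2 := sInf_le hxtmem
    rw [h] at h2
    exact (EReal.coe_ne_top _) (top_le_iff.1 h2)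
  obtain ⟨v, hv⟩ : ∃ v : ℝ, sInf Pset = (v : EReal) :=
    ⟨(sInf Pset).toReal, (EReal.coe_toReal htop hbot).symm⟩
  have hlow : ∀ x : Fin n → ℝ, m₁ ≤ x ⬝ᵥ A₁ *ᵥ x → x ⬝ᵥ A₁ *ᵥ x ≤ M₁ →
      m₂ ≤ x ⬝ᵥ A₂ *ᵥ x → x ⬝ᵥ A₂ *ᵥ x ≤ M₂ → v ≤ x ⬝ᵥ A₀ *ᵥ x := by
    intro x hx1 hx2 hx3 hx4
    have hm : (↑(x ⬝ᵥ A₀ *ᵥ x) : EReal) ∈ Pset := ⟨x, hx1, hx2, hx3, hx4, rfl⟩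
    have h2 := sInf_le hm
    rw [hv] at h2
    exact EReal.coe_le_coe_iff.1 h2
  -- separation setup
  set W : Set (Fin 3 → ℝ) := {y | ∃ x : Fin n → ℝ,
      y 0 = x ⬝ᵥ A₀ *ᵥ x ∧ y 1 = x ⬝ᵥ A₁ *ᵥ x ∧ y 2 = x ⬝ᵥ A₂ *ᵥ x} with hWdef
  have hWconv : Convex ℝ W := polyak_W_convex hn A₀ A₁ A₂ h₀ h₁ h₂ hs
  set U : Set (Fin 3 → ℝ) :=
      {y | y 0 < v ∧ m₁ < y 1 ∧ y 1 < M₁ ∧ m₂ < y 2 ∧ y 2 < M₂} with hUdef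
  have hUeq : U = {y : Fin 3 → ℝ | y 0 < v} ∩ ({y | m₁ < y 1} ∩ ({y | y 1 < M₁} ∩
      ({y | m₂ < y 2} ∩ {y | y 2 < M₂}))) := by
    ext y
    simp [hUdef, Set.mem_setOf_eq, and_assoc]
  have hlin : ∀ i : Fin 3, IsLinearMap ℝ (fun y : Fin 3 → ℝ => y i) :=
    fun i => ⟨fun a b => rfl, fun c a => rfl⟩
  have hUopen : IsOpen U := by
    rw [hUeq]
    exact (isOpen_lt (continuous_apply 0) continuous_const).inter
      ((isOpen_lt continuous_const (continuous_apply 1)).inter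
      ((isOpen_lt (continuous_apply 1) continuous_const).inter
      ((isOpen_lt continuous_const (continuous_apply 2)).inter
      (isOpen_lt (continuous_apply 2) continuous_const))))
  have hUconv : Convex ℝ U := by
    rw [hUeq]
    exact (convex_halfSpace_lt (hlin 0) v).inter
      ((convex_halfSpace_gt (hlin 1) m₁).inter
      ((convex_halfSpace_lt (hlin 1) M₁).inter
      ((convex_halfSpace_gt (hlin 2) m₂).inter
      (convex_halfSpace_lt (hlin 2) M₂))))
  have hdisj : Disjoint U W := by
    rw [Set.disjoint_left]
    rintro y hyU ⟨x, he0, he1, he2⟩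
    have := hlow x (by rw [← he1]; exact hyU.2.1.le) (by rw [← he1]; exact hyU.2.2.1.le)
      (by rw [← he2]; exact hyU.2.2.2.1.le) (by rw [← he2]; exact hyU.2.2.2.2.le)
    rw [← he0] at this
    linarith [hyU.1]
  obtain ⟨f, α, hUlt, hWge⟩ := geometric_hahn_banach_open hUconv hUopen hWconv hdisj
  set c0 : ℝ := f (Pi.single 0 1) with hc0def
  set c1 : ℝ := f (Pi.single 1 1) with hc1def
  set c2 : ℝ := f (Pi.single 2 1) with hc2def
  have hdecomp : ∀ y : Fin 3 → ℝ, f y = c0 * y 0 + c1 * y 1 + c2 * y 2 := by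
    intro y
    have hy : y = y 0 • (Pi.single 0 1 : Fin 3 → ℝ) + y 1 • (Pi.single 1 1 : Fin 3 → ℝ) + y 2 • (Pi.single 2 1 : Fin 3 → ℝ) := by
      funext i
      fin_cases i <;> simp [Pi.single_apply]
    conv_lhs => rw [hy]
    rw [map_add, map_add, _root_.map_smul, _root_.map_smul, _root_.map_smul]
    simp only [smul_eq_mul, hc0def, hc1def, hc2def]
    ring
  have hWx : ∀ x : Fin n → ℝ,
      α ≤ c0 * (x ⬝ᵥ A₀ *ᵥ x) + c1 * (x ⬝ᵥ A₁ *ᵥ x) + c2 * (x ⬝ᵥ A₂ *ᵥ x) := by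
    intro x
    have hmem : (![x ⬝ᵥ A₀ *ᵥ x, x ⬝ᵥ A₁ *ᵥ x, x ⬝ᵥ A₂ *ᵥ x]) ∈ W :=
      ⟨x, by simp, by simp, by simp⟩
    have h2 := hWge _ hmem
    rw [hdecomp] at h2
    simpa using h2
  have hUy : ∀ y0' y1' y2' : ℝ, y0' < v → m₁ < y1' → y1' < M₁ → m₂ < y2' → y2' < M₂ →
      c0 * y0' + c1 * y1' + c2 * y2' < α := by
    intro y0' y1' y2' h0 h1 h2 h3 h4
    have hmem : (![y0', y1', y2'] : Fin 3 → ℝ) ∈ U := by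
      refine ⟨by simpa using h0, by simpa using h1, by simpa using h2,
        by simpa using h3, by simpa using h4⟩
    have h5 := hUlt _ hmem
    rw [hdecomp] at h5
    simpa using h5
  -- c0 > 0
  have hsl  : m₁ < xt ⬝ᵥ A₁ *ᵥ xt := hsl1
  have hc0nonneg : 0 ≤ c0 := by
    by_contra hc0
    push_neg at hc0
    have hA := hUy (v - 1) _ _ (by linarith) hsl1 hsl2 hsl3 hsl4
    set T : ℝ := (α - (c0 * v + c1 * (xt ⬝ᵥ A₁ *ᵥ xt) + c2 * (xt ⬝ᵥ A₂ *ᵥ xt)) + 1) / (-c0)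
      with hT
    have hnum : 0 < α - (c0 * v + c1 * (xt ⬝ᵥ A₁ *ᵥ xt) + c2 * (xt ⬝ᵥ A₂ *ᵥ xt)) + 1 := by
      linarith [hA]
    have hTpos : 0 < T := div_pos hnum (by linarith)
    have hB := hUy (v - T) _ _ (by linarith) hsl1 hsl2 hsl3 hsl4
    have hTc : -c0 * T = α - (c0 * v + c1 * (xt ⬝ᵥ A₁ *ᵥ xt) + c2 * (xt ⬝ᵥ A₂ *ᵥ xt)) + 1 := by
      rw [hT]
      field_simp
      exact div_self (ne_of_lt hc0)
    linarith [hB, hTc]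
  have hc0ne : c0 ≠ 0 := by
    intro hc0
    set ε : ℝ := min (min ((xt ⬝ᵥ A₁ *ᵥ xt) - m₁) (M₁ - (xt ⬝ᵥ A₁ *ᵥ xt)))
        (min ((xt ⬝ᵥ A₂ *ᵥ xt) - m₂) (M₂ - (xt ⬝ᵥ A₂ *ᵥ xt))) / 2 with hε
    have hεpos : 0 < ε := by
      rw [hε]
      have h1 : 0 < (xt ⬝ᵥ A₁ *ᵥ xt) - m₁ := by linarith
      have h2 : 0 < M₁ - (xt ⬝ᵥ A₁ *ᵥ xt) := by linarith
      have h3 : 0 < (xt ⬝ᵥ A₂ *ᵥ xt) - m₂ := by linarith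
      have h4 : 0 < M₂ - (xt ⬝ᵥ A₂ *ᵥ xt) := by linarith
      positivity
    have hε1 : ε < (xt ⬝ᵥ A₁ *ᵥ xt) - m₁ := by
      rw [hε]
      have := min_le_left (min ((xt ⬝ᵥ A₁ *ᵥ xt) - m₁) (M₁ - (xt ⬝ᵥ A₁ *ᵥ xt)))
        (min ((xt ⬝ᵥ A₂ *ᵥ xt) - m₂) (M₂ - (xt ⬝ᵥ A₂ *ᵥ xt)))
      have := min_le_left ((xt ⬝ᵥ A₁ *ᵥ xt) - m₁) (M₁ - (xt ⬝ᵥ A₁ *ᵥ xt))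
      have h2 : 0 < M₁ - (xt ⬝ᵥ A₁ *ᵥ xt) := by linarith
      have h3 : 0 < (xt ⬝ᵥ A₂ *ᵥ xt) - m₂ := by linarith
      have h4 : 0 < M₂ - (xt ⬝ᵥ A₂ *ᵥ xt) := by linarith
      have h5 : 0 < (xt ⬝ᵥ A₁ *ᵥ xt) - m₁ := by linarith
      have hle : min (min ((xt ⬝ᵥ A₁ *ᵥ xt) - m₁) (M₁ - (xt ⬝ᵥ A₁ *ᵥ xt)))
          (min ((xt ⬝ᵥ A₂ *ᵥ xt) - m₂) (M₂ - (xt ⬝ᵥ A₂ *ᵥ xt))) ≤ (xt ⬝ᵥ A₁ *ᵥ xt) - m₁ :=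
        le_trans (min_le_left _ _) (min_le_left _ _)
      linarith
    have hε2 : ε < M₁ - (xt ⬝ᵥ A₁ *ᵥ xt) := by
      rw [hε]
      have hle : min (min ((xt ⬝ᵥ A₁ *ᵥ xt) - m₁) (M₁ - (xt ⬝ᵥ A₁ *ᵥ xt)))
          (min ((xt ⬝ᵥ A₂ *ᵥ xt) - m₂) (M₂ - (xt ⬝ᵥ A₂ *ᵥ xt))) ≤ M₁ - (xt ⬝ᵥ A₁ *ᵥ xt) :=
        le_trans (min_le_left _ _) (min_le_right _ _)
      have h3 : 0 < (xt ⬝ᵥ A₂ *ᵥ xt) - m₂ := by linarith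
      have h4 : 0 < M₂ - (xt ⬝ᵥ A₂ *ᵥ xt) := by linarith
      have h5 : 0 < (xt ⬝ᵥ A₁ *ᵥ xt) - m₁ := by linarith
      have h2 : 0 < M₁ - (xt ⬝ᵥ A₁ *ᵥ xt) := by linarith
      linarith
    have hε3 : ε < (xt ⬝ᵥ A₂ *ᵥ xt) - m₂ := by
      rw [hε]
      have hle : min (min ((xt ⬝ᵥ A₁ *ᵥ xt) - m₁) (M₁ - (xt ⬝ᵥ A₁ *ᵥ xt)))
          (min ((xt ⬝ᵥ A₂ *ᵥ xt) - m₂) (M₂ - (xt ⬝ᵥ A₂ *ᵥ xt))) ≤ (xt ⬝ᵥ A₂ *ᵥ xt) - m₂ :=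
        le_trans (min_le_right _ _) (min_le_left _ _)
      have h3 : 0 < (xt ⬝ᵥ A₂ *ᵥ xt) - m₂ := by linarith
      have h4 : 0 < M₂ - (xt ⬝ᵥ A₂ *ᵥ xt) := by linarith
      have h5 : 0 < (xt ⬝ᵥ A₁ *ᵥ xt) - m₁ := by linarith
      have h2 : 0 < M₁ - (xt ⬝ᵥ A₁ *ᵥ xt) := by linarith
      linarith
    have hε4 : ε < M₂ - (xt ⬝ᵥ A₂ *ᵥ xt) := by
      rw [hε]
      have hle : min (min ((xt ⬝ᵥ A₁ *ᵥ xt) - m₁) (M₁ - (xt ⬝ᵥ A₁ *ᵥ xt)))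
          (min ((xt ⬝ᵥ A₂ *ᵥ xt) - m₂) (M₂ - (xt ⬝ᵥ A₂ *ᵥ xt))) ≤ M₂ - (xt ⬝ᵥ A₂ *ᵥ xt) :=
        le_trans (min_le_right _ _) (min_le_right _ _)
      have h3 : 0 < (xt ⬝ᵥ A₂ *ᵥ xt) - m₂ := by linarith
      have h4 : 0 < M₂ - (xt ⬝ᵥ A₂ *ᵥ xt) := by linarith
      have h5 : 0 < (xt ⬝ᵥ A₁ *ᵥ xt) - m₁ := by linarith
      have h2 : 0 < M₁ - (xt ⬝ᵥ A₁ *ᵥ xt) := by linarith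
      linarith
    set δ1 : ℝ := if 0 ≤ c1 then ε else -ε with hδ1
    set δ2 : ℝ := if 0 ≤ c2 then ε else -ε with hδ2
    have hδ1abs : c1 * δ1 = |c1| * ε := by
      rw [hδ1]
      by_cases h : 0 ≤ c1
      · rw [if_pos h, abs_of_nonneg h]
      · rw [if_neg h, abs_of_neg (not_le.1 h)]; ring
    have hδ2abs : c2 * δ2 = |c2| * ε := by
      rw [hδ2]
      by_cases h : 0 ≤ c2
      · rw [if_pos h, abs_of_nonneg h]
      · rw [if_neg h, abs_of_neg (not_le.1 h)]; ring
    have hδ1b : |δ1| ≤ ε := by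
      rw [hδ1]; by_cases h : 0 ≤ c1 <;> simp [h, abs_of_nonneg hεpos.le, abs_of_pos hεpos]
    have hδ2b : |δ2| ≤ ε := by
      rw [hδ2]; by_cases h : 0 ≤ c2 <;> simp [h, abs_of_nonneg hεpos.le, abs_of_pos hεpos]
    have hA := hUy (v - 1) ((xt ⬝ᵥ A₁ *ᵥ xt) + δ1) ((xt ⬝ᵥ A₂ *ᵥ xt) + δ2)
      (by linarith)
      (by cases abs_le.1 hδ1b; linarith)
      (by cases abs_le.1 hδ1b; linarith)
      (by cases abs_le.1 hδ2b; linarith)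
      (by cases abs_le.1 hδ2b; linarith)
    have hB := hWx xt
    rw [hc0] at hA hB
    have habs1 : 0 ≤ |c1| * ε := mul_nonneg (abs_nonneg _) hεpos.le
    have habs2 : 0 ≤ |c2| * ε := mul_nonneg (abs_nonneg _) hεpos.le
    linarith [hδ1abs, hδ2abs, hA, hB, habs1, habs2]
  have hc0pos : 0 < c0 := hc0nonneg.lt_of_ne (Ne.symm hc0ne)
  -- normalized quantities
  set r1 : ℝ := c1 / c0 with hr1
  set r2 : ℝ := c2 / c0 with hr2
  set β : ℝ := α / c0 with hβ
  have hform : ∀ x : Fin n → ℝ,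
      β ≤ x ⬝ᵥ A₀ *ᵥ x + r1 * (x ⬝ᵥ A₁ *ᵥ x) + r2 * (x ⬝ᵥ A₂ *ᵥ x) := by
    intro x
    have hkey : x ⬝ᵥ A₀ *ᵥ x + r1 * (x ⬝ᵥ A₁ *ᵥ x) + r2 * (x ⬝ᵥ A₂ *ᵥ x) - β
        = (c0 * (x ⬝ᵥ A₀ *ᵥ x) + c1 * (x ⬝ᵥ A₁ *ᵥ x) + c2 * (x ⬝ᵥ A₂ *ᵥ x) - α) / c0 := by
      rw [hr1, hr2, hβ]
      field_simp
    have h2 : 0 ≤ (c0 * (x ⬝ᵥ A₀ *ᵥ x) + c1 * (x ⬝ᵥ A₁ *ᵥ x) + c2 * (x ⬝ᵥ A₂ *ᵥ x) - α) / c0 :=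
      div_nonneg (by linarith [hWx x]) hc0pos.le
    linarith [hkey ▸ h2]
  have hβ0 : β ≤ 0 := by
    have h2 : α ≤ 0 := by
      have := hWx 0
      simpa using this
    rw [hβ]
    exact div_nonpos_of_nonpos_of_nonneg h2 hc0pos.le
  have hbox : ∀ y1' y2' : ℝ, m₁ < y1' → y1' < M₁ → m₂ < y2' → y2' < M₂ →
      v + r1 * y1' + r2 * y2' ≤ β := by
    intro y1' y2' h1 h2 h3 h4
    apply le_of_forall_pos_le_add
    intro t ht
    have hlt := hUy (v - t) y1' y2' (by linarith) h1 h2 h3 h4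
    have hkey : v + r1 * y1' + r2 * y2' - (β + t)
        = (c0 * (v - t) + c1 * y1' + c2 * y2' - α) / c0 := by
      rw [hr1, hr2, hβ]
      field_simp
      ring
    have hle : (c0 * (v - t) + c1 * y1' + c2 * y2' - α) / c0 ≤ 0 :=
      div_nonpos_of_nonpos_of_nonneg (by linarith) hc0pos.le
    linarith [hkey ▸ hle]
  have hcorner : v + max (r1*m₁) (r1*M₁) + max (r2*m₂) (r2*M₂) ≤ β := by
    apply le_of_forall_pos_le_add
    intro ε hε
    obtain ⟨y1', hy1a, hy1b, hy1c⟩ := corner_approx r1 m₁ M₁ hb₁ (half_pos hε)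
    obtain ⟨y2', hy2a, hy2b, hy2c⟩ := corner_approx r2 m₂ M₂ hb₂ (half_pos hε)
    have := hbox y1' y2' hy1a hy1b hy2a hy2b
    linarith
  -- build dual multipliers
  set u1 : ℝ := max r1 0 with hu1
  set l1 : ℝ := max (-r1) 0 with hl1
  set u2 : ℝ := max r2 0 with hu2
  set l2 : ℝ := max (-r2) 0 with hl2
  have hsub1 : u1 - l1 = r1 := by
    rcases le_total 0 r1 with h | h
    · rw [hu1, hl1, max_eq_left h, max_eq_right (neg_nonpos.2 h)]; ring
    · rw [hu1, hl1, max_eq_right h, max_eq_left (neg_nonneg.2 h)]; ring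
  have hsub2 : u2 - l2 = r2 := by
    rcases le_total 0 r2 with h | h
    · rw [hu2, hl2, max_eq_left h, max_eq_right (neg_nonpos.2 h)]; ring
    · rw [hu2, hl2, max_eq_right h, max_eq_left (neg_nonneg.2 h)]; ring
  have hval1 : l1 * m₁ - u1 * M₁ = -(max (r1*m₁) (r1*M₁)) := by
    rcases le_total 0 r1 with h | h
    · rw [hu1, hl1, max_eq_left h, max_eq_right (neg_nonpos.2 h),
        max_eq_right (mul_le_mul_of_nonneg_left hb₁.le h)]
      ring
    · rw [hu1, hl1, max_eq_right h, max_eq_left (neg_nonneg.2 h),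
        max_eq_left (mul_le_mul_of_nonpos_left hb₁.le h)]
      ring
  have hval2 : l2 * m₂ - u2 * M₂ = -(max (r2*m₂) (r2*M₂)) := by
    rcases le_total 0 r2 with h | h
    · rw [hu2, hl2, max_eq_left h, max_eq_right (neg_nonpos.2 h),
        max_eq_right (mul_le_mul_of_nonneg_left hb₂.le h)]
      ring
    · rw [hu2, hl2, max_eq_right h, max_eq_left (neg_nonneg.2 h),
        max_eq_left (mul_le_mul_of_nonpos_left hb₂.le h)]
      ring
  -- PSD
  have hHsymm : (A₀ + (u1 - l1) • A₁ + (u2 - l2) • A₂).IsSymm := by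
    rw [Matrix.IsSymm, Matrix.transpose_add, Matrix.transpose_add, Matrix.transpose_smul,
      Matrix.transpose_smul, h₀.eq, h₁.eq, h₂.eq]
  have hpsd : (A₀ + (u1 - l1) • A₁ + (u2 - l2) • A₂).PosSemidef := by
    refine Matrix.PosSemidef.of_dotProduct_mulVec_nonneg (isHermitian_of_isSymm hHsymm) ?_
    intro x
    rw [star_trivial]
    show (0:ℝ) ≤ x ⬝ᵥ (A₀ + (u1 - l1) • A₁ + (u2 - l2) • A₂) *ᵥ x
    rw [quad_comb3, hsub1, hsub2]
    by_contra hneg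
    push_neg at hneg
    set E : ℝ := x ⬝ᵥ A₀ *ᵥ x + r1 * (x ⬝ᵥ A₁ *ᵥ x) + r2 * (x ⬝ᵥ A₂ *ᵥ x) with hE
    have hElt : E < 0 := hneg
    have hBE : 0 ≤ β / E := by
      rw [show β / E = (-β) / (-E) by rw [neg_div_neg_eq]]
      exact div_nonneg (by linarith) (by linarith)
    set t : ℝ := Real.sqrt (β / E) + 1 with htdef
    have hsq : Real.sqrt (β / E) ^ 2 = β / E := Real.sq_sqrt hBE
    have ht2 : β / E < t ^ 2 := by
      rw [htdef]
      nlinarith [Real.sqrt_nonneg (β / E)]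
    have hmul : t ^ 2 * E < (β / E) * E := by
      exact mul_lt_mul_of_neg_right ht2 hElt
    rw [div_mul_cancel₀ _ (ne_of_lt hElt)] at hmul
    have hf := hform (t • x)
    rw [quad_smul, quad_smul, quad_smul] at hf
    have hf2 : β ≤ t^2 * E := by
      rw [hE]
      linarith [hf]
    linarith [hmul, hf2]
  -- assemble
  have hdmem : (↑(l1 * m₁ - u1 * M₁ + l2 * m₂ - u2 * M₂) : EReal) ∈ Dset :=
    ⟨l1, u1, l2, u2, le_max_right _ _, le_max_right _ _, le_max_right _ _, le_max_right _ _,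
      hpsd, rfl⟩
  have hvd : v ≤ l1 * m₁ - u1 * M₁ + l2 * m₂ - u2 * M₂ := by
    linarith [hval1, hval2, hcorner, hβ0]
  rw [hv]
  exact le_trans (EReal.coe_le_coe_iff.2 hvd) (le_sSup hdmem)
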